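/- The cross product P of rank 3 induces a cross product of rank 2 on the orthogonal complement of e_0: for all u, v ∈ ℝ^8 orthogonal to e_0, the vector P(e_0, u, v) is orthogonal to e_0, to u, and to v, and satisfies ‖P(e_0,u,v)‖² = ‖u‖²‖v‖² − ⟨u,v⟩². -/

import Mathlib

open RealInnerProductSpace

noncomputable section

/-- Euclidean space `ℝ^8`. -/
abbrev E8 : Type := EuclideanSpace ℝ (Fin 8)

/-- The standard orthonormal basis vectors `e_0, …, e_7` of `ℝ^8`. -/
def e (i : Fin 8) : E8 := EuclideanSpace.single i 1

/-- The elementary alternating 4-form `e^i ∧ e^j ∧ e^k ∧ e^l` evaluated on `(u,v,w,x)`. -/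
def wedge4 (i j k l : Fin 8) (u v w x : E8) : ℝ :=
  Matrix.det !![u i, u j, u k, u l;
                v i, v j, v k, v l;
                w i, w j, w k, w l;
                x i, x j, x k, x l]

/-- The standard `Spin(7)`-form `φ₀` on `ℝ^8`:
`φ₀ = e^{0145}+e^{0167}+e^{2345}+e^{2367}+e^{0246}−e^{0257}−e^{1346}+e^{1357}
     −e^{0347}−e^{0356}−e^{1247}−e^{1256}+e^{0123}+e^{4567}`. -/
def phi0 (u v w x : E8) : ℝ :=
    wedge4 0 1 4 5 u v w x + wedge4 0 1 6 7 u v w x + wedge4 2 3 4 5 u v w x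
  + wedge4 2 3 6 7 u v w x + wedge4 0 2 4 6 u v w x - wedge4 0 2 5 7 u v w x
  - wedge4 1 3 4 6 u v w x + wedge4 1 3 5 7 u v w x - wedge4 0 3 4 7 u v w x
  - wedge4 0 3 5 6 u v w x - wedge4 1 2 4 7 u v w x - wedge4 1 2 5 6 u v w x
  + wedge4 0 1 2 3 u v w x + wedge4 4 5 6 7 u v w x

/-- The triple cross product `P : ℝ^8 × ℝ^8 × ℝ^8 → ℝ^8`, determined by
`⟨P(u,v,w), x⟩ = φ₀(u,v,w,x)` for all `x ∈ ℝ^8`. -/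
def P (u v w : E8) : E8 :=
  (WithLp.equiv 2 (Fin 8 → ℝ)).symm (fun i => phi0 u v w (e i))

theorem my_det_fin_four (M : Matrix (Fin 4) (Fin 4) ℝ) :
    M.det =
      M 0 0 * M 1 1 * M 2 2 * M 3 3 - M 0 0 * M 1 1 * M 2 3 * M 3 2 -
      M 0 0 * M 1 2 * M 2 1 * M 3 3 + M 0 0 * M 1 2 * M 2 3 * M 3 1 +
      M 0 0 * M 1 3 * M 2 1 * M 3 2 - M 0 0 * M 1 3 * M 2 2 * M 3 1 -
      M 0 1 * M 1 0 * M 2 2 * M 3 3 + M 0 1 * M 1 0 * M 2 3 * M 3 2 +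
      M 0 1 * M 1 2 * M 2 0 * M 3 3 - M 0 1 * M 1 2 * M 2 3 * M 3 0 -
      M 0 1 * M 1 3 * M 2 0 * M 3 2 + M 0 1 * M 1 3 * M 2 2 * M 3 0 +
      M 0 2 * M 1 0 * M 2 1 * M 3 3 - M 0 2 * M 1 0 * M 2 3 * M 3 1 -
      M 0 2 * M 1 1 * M 2 0 * M 3 3 + M 0 2 * M 1 1 * M 2 3 * M 3 0 +
      M 0 2 * M 1 3 * M 2 0 * M 3 1 - M 0 2 * M 1 3 * M 2 1 * M 3 0 -
      M 0 3 * M 1 0 * M 2 1 * M 3 2 + M 0 3 * M 1 0 * M 2 2 * M 3 1 +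
      M 0 3 * M 1 1 * M 2 0 * M 3 2 - M 0 3 * M 1 1 * M 2 2 * M 3 0 -
      M 0 3 * M 1 2 * M 2 0 * M 3 1 + M 0 3 * M 1 2 * M 2 1 * M 3 0 := by
  rw [Matrix.det_succ_row_zero, Fin.sum_univ_four]
  simp [Matrix.det_fin_three, Matrix.submatrix, Fin.succ, Fin.succAbove, Fin.lt_def,
    Fin.castSucc, Fin.castAdd, Fin.castLE, show ((3:Fin 4):ℕ) = 3 from rfl]
  ring

theorem wedge4_eq (i j k l : Fin 8) (u v w x : E8) :
    wedge4 i j k l u v w x = u i*v j*w k*x l - u i*v j*w l*x k - u i*v k*w j*x l + u i*v k*w l*x j + u i*v l*w j*x k - u i*v l*w k*x j - u j*v i*w k*x l + u j*v i*w l*x k + u j*v k*w i*x l - u j*v k*w l*x i - u j*v l*w i*x k + u j*v l*w k*x i + u k*v i*w j*x l - u k*v i*w l*x j - u k*v j*w i*x l + u k*v j*w l*x i + u k*v l*w i*x j - u k*v l*w j*x i - u l*v i*w j*x k + u l*v i*w k*x j + u l*v j*w i*x k - u l*v j*w k*x i - u l*v k*w i*x j + u l*v k*w j*x i := by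
  rw [wedge4, my_det_fin_four]; simp

set_option maxHeartbeats 2000000 in
/-- `P` induces a rank-2 cross product on the orthogonal complement of `e_0`. -/
theorem P_induces_rank_two_cross_product (u v : E8)
    (hu : ⟪u, e 0⟫ = 0) (hv : ⟪v, e 0⟫ = 0) :
    ⟪P (e 0) u v, e 0⟫ = 0 ∧ ⟪P (e 0) u v, u⟫ = 0 ∧ ⟪P (e 0) u v, v⟫ = 0 ∧
      ‖P (e 0) u v‖ ^ 2 = ‖u‖ ^ 2 * ‖v‖ ^ 2 - ⟪u, v⟫ ^ 2 := by
  have hu0 : u 0 = 0 := by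
    simpa [e, PiLp.inner_apply, EuclideanSpace.single_apply, Fin.sum_univ_eight] using hu
  have hv0 : v 0 = 0 := by
    simpa [e, PiLp.inner_apply, EuclideanSpace.single_apply, Fin.sum_univ_eight] using hv
  have hc0 : P (e 0) u v 0 = 0 := by
    simp only [P, WithLp.equiv_symm_apply, PiLp.toLp_apply, phi0, wedge4_eq, e, EuclideanSpace.single_apply]
    simp
    try ring
  have hc1 : P (e 0) u v 1 = u 2 * v 3 - u 3 * v 2 + u 4 * v 5 - u 5 * v 4 + u 6 * v 7 - u 7 * v 6 := by
    simp only [P, WithLp.equiv_symm_apply, PiLp.toLp_apply, phi0, wedge4_eq, e, EuclideanSpace.single_apply]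
    simp
    try ring
  have hc2 : P (e 0) u v 2 = -u 1 * v 3 + u 3 * v 1 + u 4 * v 6 - u 5 * v 7 - u 6 * v 4 + u 7 * v 5 := by
    simp only [P, WithLp.equiv_symm_apply, PiLp.toLp_apply, phi0, wedge4_eq, e, EuclideanSpace.single_apply]
    simp
    try ring
  have hc3 : P (e 0) u v 3 = u 1 * v 2 - u 2 * v 1 - u 4 * v 7 - u 5 * v 6 + u 6 * v 5 + u 7 * v 4 := by
    simp only [P, WithLp.equiv_symm_apply, PiLp.toLp_apply, phi0, wedge4_eq, e, EuclideanSpace.single_apply]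
    simp
    try ring
  have hc4 : P (e 0) u v 4 = -u 1 * v 5 - u 2 * v 6 + u 3 * v 7 + u 5 * v 1 + u 6 * v 2 - u 7 * v 3 := by
    simp only [P, WithLp.equiv_symm_apply, PiLp.toLp_apply, phi0, wedge4_eq, e, EuclideanSpace.single_apply]
    simp
    try ring
  have hc5 : P (e 0) u v 5 = u 1 * v 4 + u 2 * v 7 + u 3 * v 6 - u 4 * v 1 - u 6 * v 3 - u 7 * v 2 := by
    simp only [P, WithLp.equiv_symm_apply, PiLp.toLp_apply, phi0, wedge4_eq, e, EuclideanSpace.single_apply]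
    simp
    try ring
  have hc6 : P (e 0) u v 6 = -u 1 * v 7 + u 2 * v 4 - u 3 * v 5 - u 4 * v 2 + u 5 * v 3 + u 7 * v 1 := by
    simp only [P, WithLp.equiv_symm_apply, PiLp.toLp_apply, phi0, wedge4_eq, e, EuclideanSpace.single_apply]
    simp
    try ring
  have hc7 : P (e 0) u v 7 = u 1 * v 6 - u 2 * v 5 - u 3 * v 4 + u 4 * v 3 + u 5 * v 2 - u 6 * v 1 := by
    simp only [P, WithLp.equiv_symm_apply, PiLp.toLp_apply, phi0, wedge4_eq, e, EuclideanSpace.single_apply]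
    simp
    try ring
  have hn : ‖P (e 0) u v‖ ^ 2 = ⟪P (e 0) u v, P (e 0) u v⟫ :=
    (real_inner_self_eq_norm_sq _).symm
  have hnu : ‖u‖ ^ 2 = ⟪u, u⟫ := (real_inner_self_eq_norm_sq _).symm
  have hnv : ‖v‖ ^ 2 = ⟪v, v⟫ := (real_inner_self_eq_norm_sq _).symm
  refine ⟨?_, ?_, ?_, ?_⟩ <;>
  · simp only [hn, hnu, hnv, PiLp.inner_apply, RCLike.inner_apply, conj_trivial,
      Fin.sum_univ_eight, hc0, hc1, hc2, hc3, hc4, hc5, hc6, hc7, hu0, hv0]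
    simp [e, EuclideanSpace.single_apply]
    try ring
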